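/- Let (ζ(a,n))_{(a,n)} be independent Bernoulli random variables indexed by pairs (a,n) ∈ ℤ × ℤ≥0 with a + n even, each equal to 1 with probability at least 1 - δ. Consider the event E that there exists an infinite sequence (a_i)_{i≥0} with a_0 = 0, |a_{i+1} - a_i| = 1, and ζ(a_i, i) = 1 for all i ≥ 0. Then P(E) → 1 as δ → 0; in particular there exists δ₀ > 0 such that P(E) > 0 for all δ < δ₀. -/

import Mathlib

open MeasureTheory ProbabilityTheory
open scoped ENNReal

namespace Trunc11

abbrev Cell := ℤ × ℤ

inductive Dir | N | E | S | W deriving DecidableEq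

instance : Fintype Dir := ⟨{Dir.N, Dir.E, Dir.S, Dir.W}, by intro x; cases x <;> decide⟩

open Dir

def vec : Dir → Cell
  | N => (0,1) | E => (1,0) | S => (0,-1) | W => (-1,0)

def rot : Dir → Dir
  | N => E | E => S | S => W | W => N

def cvec : Dir → Cell
  | N => (0,1) | E => (1,1) | S => (1,0) | W => (0,0)

abbrev Wall := Cell × Dir

def astep : Wall → Fin 3 → Wall := fun w t =>
  match t with
  | 0 => (w.1, rot w.2)
  | 1 => (w.1 + vec (rot w.2), w.2)
  | 2 => (w.1 + vec (rot w.2) + vec w.2, rot (rot (rot w.2)))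

def corner (w : Wall) : Cell := w.1 + cvec w.2

lemma rot4 (d : Dir) : rot (rot (rot (rot d))) = d := by cases d <;> rfl

lemma vec_rot2 (d : Dir) : vec (rot (rot d)) = -vec d := by cases d <;> decide

lemma vec_rot3 (d : Dir) : vec (rot (rot (rot d))) = -vec (rot d) := by cases d <;> decide

lemma corner_astep (w : Wall) (t : Fin 3) :
    corner (astep w t) = corner w + vec (rot w.2) := by
  rcases w with ⟨c, d⟩
  fin_cases t <;> cases d <;>
    simp [astep, corner, cvec, vec, rot, Prod.ext_iff]

section walls

variable (R : Set Cell)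

open Classical in
noncomputable def turnOf (w : Wall) : Fin 3 :=
  if w.1 + vec (rot w.2) ∈ R then
    (if w.1 + vec (rot w.2) + vec w.2 ∈ R then 2 else 1) else 0

noncomputable def fnext (w : Wall) : Wall := astep w (turnOf R w)

def isWall (w : Wall) : Prop := w.1 ∈ R ∧ w.1 + vec w.2 ∉ R

lemma fnext_isWall {w : Wall} (hw : isWall R w) : isWall R (fnext R w) := by
  rcases w with ⟨c, d⟩
  rcases hw with ⟨hc, hcd⟩
  unfold fnext turnOf
  split_ifs with ha hb
  · refine ⟨hb, ?_⟩
    simpa [astep, vec_rot3, add_assoc] using hcd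
  · exact ⟨ha, hb⟩
  · exact ⟨hc, ha⟩

open Classical in
noncomputable def decode (z : Wall) : Wall :=
  if z.1 + vec (rot (rot (rot z.2))) ∈ R then
    (if z.1 + vec z.2 + vec (rot (rot (rot z.2))) ∈ R then
      (z.1 + vec z.2 + vec (rot (rot (rot z.2))), rot z.2)
     else (z.1 + vec (rot (rot (rot z.2))), z.2))
  else (z.1, rot (rot (rot z.2)))

lemma astep_two (w : Wall) :
    astep w 2 = (w.1 + vec (rot w.2) + vec w.2, rot (rot (rot w.2))) := rfl
lemma astep_one (w : Wall) : astep w 1 = (w.1 + vec (rot w.2), w.2) := rfl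
lemma astep_zero (w : Wall) : astep w 0 = (w.1, rot w.2) := rfl

lemma decode_fnext {w : Wall} (hw : isWall R w) : decode R (fnext R w) = w := by
  classical
  rcases w with ⟨c, d⟩
  rcases hw with ⟨hc, hcd⟩
  simp only [isWall] at hc hcd
  unfold fnext turnOf
  split_ifs with ha hb
  · -- left turn
    rw [astep_two]
    unfold decode
    have h6 : rot (rot (rot (rot (rot (rot d))))) = rot (rot d) := by cases d <;> rfl
    simp only [h6, vec_rot2, vec_rot3]
    have e1 : (c, d).1 + vec (rot d) + vec d + -vec d = c + vec (rot d) := by abel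
    rw [e1, if_pos ha]
    have e2 : (c, d).1 + vec (rot d) + vec d + -vec (rot d) + -vec d = c := by abel
    rw [e2, if_pos hc]
    have h4 : rot (rot (rot (rot d))) = d := rot4 d
    rw [h4]
  · -- straight
    rw [astep_one]
    unfold decode
    simp only [vec_rot3]
    have e1 : (c, d).1 + vec (rot d) + -vec (rot d) = c := by abel
    rw [e1, if_pos hc]
    have e2 : (c, d).1 + vec (rot d) + vec d + -vec (rot d) = c + vec d := by abel
    rw [e2, if_neg hcd]
  · -- right turn
    rw [astep_zero]
    unfold decode
    have h4 : rot (rot (rot (rot d))) = d := rot4 d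
    simp only [h4]
    rw [if_neg hcd]

lemma fnext_injOn {x y : Wall} (hx : isWall R x) (hy : isWall R y)
    (h : fnext R x = fnext R y) : x = y := by
  have := decode_fnext R hx
  rw [h, decode_fnext R hy] at this
  exact this.symm

end walls

/-! ### Reachability -/

inductive Reach (η : Cell → Bool) : Cell → Prop
  | origin : η (0,0) = true → Reach η (0,0)
  | stepE {c : Cell} : Reach η c → η (c + (1,0)) = true → Reach η (c + (1,0))
  | stepN {c : Cell} : Reach η c → η (c + (0,1)) = true → Reach η (c + (0,1))

variable {η : Cell → Bool}

lemma Reach.eta {c : Cell} (h : Reach η c) : η c = true := by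
  cases h with
  | origin h => exact h
  | stepE _ h => exact h
  | stepN _ h => exact h

lemma Reach.nonneg {c : Cell} (h : Reach η c) : 0 ≤ c.1 ∧ 0 ≤ c.2 := by
  induction h with
  | origin _ => exact ⟨le_refl 0, le_refl 0⟩
  | stepE _ _ ih => exact ⟨by simpa using le_trans ih.1 (by omega), by simpa using ih.2⟩
  | stepN _ _ ih => exact ⟨by simpa using ih.1, by simpa using le_trans ih.2 (by omega)⟩

lemma Reach.levels {c : Cell} (h : Reach η c) :
    ∀ m : ℤ, 0 ≤ m → m ≤ c.1 + c.2 → ∃ d, Reach η d ∧ d.1 + d.2 = m := by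
  induction h with
  | origin h0 =>
    intro m hm hm'
    refine ⟨(0,0), Reach.origin h0, ?_⟩
    simp at hm' ⊢; omega
  | @stepE c hr he ih =>
    intro m hm hm'
    rcases lt_or_ge m (c.1 + c.2 + 1) with h' | h'
    · exact ih m hm (by omega)
    · refine ⟨c + (1,0), Reach.stepE hr he, ?_⟩
      have : m = c.1 + c.2 + 1 := by
        simp [Prod.fst_add, Prod.snd_add] at hm'; omega
      simp [Prod.fst_add, Prod.snd_add]; omega
  | @stepN c hr he ih =>
    intro m hm hm'
    rcases lt_or_ge m (c.1 + c.2 + 1) with h' | h'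
    · exact ih m hm (by omega)
    · refine ⟨c + (0,1), Reach.stepN hr he, ?_⟩
      simp [Prod.fst_add, Prod.snd_add] at hm' ⊢; omega

lemma reach_closed {c : Cell} (hr : Reach η c) {d : Dir}
    (hd : d = Dir.N ∨ d = Dir.E) (hno : ¬ Reach η (c + vec d)) :
    η (c + vec d) = false := by
  rcases hd with rfl | rfl
  · by_contra hcon
    exact hno (Reach.stepN hr (by simpa [vec] using Bool.not_eq_false _ |>.mp hcon))
  · by_contra hcon
    exact hno (Reach.stepE hr (by simpa [vec] using Bool.not_eq_false _ |>.mp hcon))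

/-! ### Walk encoding -/

def e0 : Wall := (((0:ℤ),(0:ℤ)), Dir.W)

def walkF (v : ℕ → Fin 3) : ℕ → Wall
  | 0 => e0
  | k+1 => astep (walkF v k) (v k)

def siteOf (w : Wall) : Finset Cell :=
  match w.2 with
  | Dir.N => {w.1 + ((0:ℤ),(1:ℤ))}
  | Dir.E => {w.1 + ((1:ℤ),(0:ℤ))}
  | _ => ∅

def sites (L : ℕ) (v : ℕ → Fin 3) : Finset Cell :=
  (Finset.range L).biUnion (fun k => siteOf (walkF v k))

lemma walkF_congr {v v' : ℕ → Fin 3} {L : ℕ} (h : ∀ k < L, v k = v' k) :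
    ∀ k ≤ L, walkF v k = walkF v' k := by
  intro k hk
  induction k with
  | zero => rfl
  | succ k ih =>
    rw [walkF, walkF, ih (by omega), h k (by omega)]

lemma sites_congr {v v' : ℕ → Fin 3} {L : ℕ} (h : ∀ k < L, v k = v' k) :
    sites L v = sites L v' := by
  unfold sites
  apply Finset.biUnion_congr rfl
  intro k hk
  rw [walkF_congr (fun j hj => h j (by omega)) k (le_of_lt (Finset.mem_range.mp hk))]


/-! ### The core contour lemma -/

lemma core (h0 : η (0,0) = true) (hfin : {c | Reach η c}.Finite) :
    ∃ L : ℕ, 0 < L ∧ ∃ v : ℕ → Fin 3,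
      (L + 3) / 4 ≤ (sites L v).card ∧
      ∀ s ∈ sites L v, (0 ≤ s.1 ∧ 0 ≤ s.2) ∧ η s = false := by
  classical
  set R : Set Cell := {c | Reach η c} with hR
  have he0 : isWall R e0 := by
    constructor
    · exact Reach.origin h0
    · intro h
      have h1 := (Reach.nonneg h).1
      simp [e0, vec] at h1
  set g : Wall → Wall := fnext R with hg
  have hwalls : ∀ k, isWall R (g^[k] e0) := by
    intro k
    induction k with
    | zero => exact he0
    | succ k ih =>
      rw [Function.iterate_succ_apply']
      exact fnext_isWall R ih
  -- pigeonhole on the finite set of walls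
  have hWS : {w : Wall | isWall R w}.Finite := by
    apply Set.Finite.subset (hfin.prod (Set.finite_univ (α := Dir)))
    intro w hw
    exact ⟨hw.1, Set.mem_univ _⟩
  obtain ⟨i, j, hij, heq⟩ :=
    hWS.exists_lt_map_eq_of_forall_mem (f := fun k : ℕ => g^[k] e0)
      (fun k => by simpa using hwalls k)
  have cancel : ∀ (k : ℕ) (x y : Wall), isWall R x → isWall R y →
      (∀ m : ℕ, isWall R (g^[m] x)) → (∀ m : ℕ, isWall R (g^[m] y)) →
      g^[k] x = g^[k] y → x = y := by
    intro k
    induction k with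
    | zero => intro x y _ _ _ _ h; simpa using h
    | succ k ih =>
      intro x y hx hy hxs hys h
      rw [Function.iterate_succ_apply', Function.iterate_succ_apply'] at h
      have hx' := hxs k
      have hy' := hys k
      exact ih x y hx hy hxs hys (fnext_injOn R hx' hy' h)
  have iter_shift : ∀ (a b : ℕ), g^[a + b] e0 = g^[a] (g^[b] e0) :=
    fun a b => Function.iterate_add_apply g a b e0
  have hwalls2 : ∀ (b m : ℕ), isWall R (g^[m] (g^[b] e0)) := by
    intro b m; rw [← Function.iterate_add_apply]
    exact hwalls _
  have hex : ∃ k, 0 < k ∧ g^[k] e0 = e0 := by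
    refine ⟨j - i, by omega, ?_⟩
    have : g^[i] (g^[j-i] e0) = g^[i] e0 := by
      rw [← iter_shift]
      have : i + (j - i) = j := by omega
      rw [this]; exact heq.symm
    exact cancel i _ _ (hwalls _) he0 (hwalls2 _) (fun m => hwalls m) this
  set L := Nat.find hex with hLdef
  obtain ⟨hLpos, hLret⟩ := Nat.find_spec hex
  have hdist : ∀ k l, k < l → l < L → g^[k] e0 ≠ g^[l] e0 := by
    intro k l hkl hlL hq
    have : g^[k] (g^[l-k] e0) = g^[k] e0 := by
      rw [← iter_shift]
      have : k + (l - k) = l := by omega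
      rw [this]; exact hq.symm
    have hper : g^[l-k] e0 = e0 :=
      cancel k _ _ (hwalls _) he0 (hwalls2 _) (fun m => hwalls m) this
    exact Nat.find_min hex (by omega) ⟨by omega, hper⟩
  set v : ℕ → Fin 3 := fun k => turnOf R (g^[k] e0) with hv
  have walk_eq : ∀ k, walkF v k = g^[k] e0 := by
    intro k
    induction k with
    | zero => rfl
    | succ k ih =>
      rw [walkF, ih, Function.iterate_succ_apply']
      rfl
  -- telescoping corner sum
  have tele : ∀ k, corner (walkF v k) =
      corner e0 + ∑ j ∈ Finset.range k, vec (rot ((walkF v j).2)) := by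
    intro k
    induction k with
    | zero => simp [walkF]
    | succ k ih =>
      rw [walkF, corner_astep, ih, Finset.sum_range_succ]
      abel
  have hsum0 : ∑ j ∈ Finset.range L, vec (rot ((walkF v j).2)) = 0 := by
    have h2 := tele L
    rw [walk_eq, hLret] at h2
    exact left_eq_add.mp h2
  -- sites are closed, nonnegative sites
  have hsitesP : ∀ s ∈ sites L v, (0 ≤ s.1 ∧ 0 ≤ s.2) ∧ η s = false := by
    intro s hs
    rw [sites, Finset.mem_biUnion] at hs
    obtain ⟨k, hk, hsk⟩ := hs
    have hw := hwalls k
    rw [← walk_eq k] at hw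
    obtain ⟨hw1, hw2⟩ := hw
    have hreach : Reach η (walkF v k).1 := hw1
    have hnn := Reach.nonneg hreach
    cases hdir : (walkF v k).2 with
    | N =>
      rw [siteOf, hdir] at hsk
      rw [Finset.mem_singleton] at hsk
      subst hsk
      rw [hdir] at hw2
      have hvecN : vec Dir.N = ((0:ℤ),(1:ℤ)) := rfl
      constructor
      · constructor
        · simpa using hnn.1
        · have : (0:ℤ) ≤ (walkF v k).1.2 := hnn.2
          simp [Prod.snd_add]
          omega
      · rw [← hvecN]
        exact reach_closed hreach (Or.inl rfl) (by rw [hvecN]; exact hw2)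
    | E =>
      rw [siteOf, hdir] at hsk
      rw [Finset.mem_singleton] at hsk
      subst hsk
      rw [hdir] at hw2
      have hvecE : vec Dir.E = ((1:ℤ),(0:ℤ)) := rfl
      constructor
      · constructor
        · have : (0:ℤ) ≤ (walkF v k).1.1 := hnn.1
          simp [Prod.fst_add]
          omega
        · simpa using hnn.2
      · rw [← hvecE]
        exact reach_closed hreach (Or.inr rfl) (by rw [hvecE]; exact hw2)
    | S => rw [siteOf, hdir] at hsk; simp at hsk
    | W => rw [siteOf, hdir] at hsk; simp at hsk
  -- counting
  have hdistw : ∀ k l, k < L → l < L → k ≠ l → walkF v k ≠ walkF v l := by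
    intro k l hk hl hkl
    rw [walk_eq, walk_eq]
    rcases Nat.lt_or_ge k l with h | h
    · exact hdist k l h hl
    · exact fun hq => hdist l k (by omega) hk hq.symm
  have hcardN : ((Finset.range L).filter (fun k => (walkF v k).2 = Dir.N)).card
      ≤ (sites L v).card := by
    apply Finset.card_le_card_of_injOn (fun k => (walkF v k).1 + ((0:ℤ),(1:ℤ)))
    · intro k hk
      rw [Finset.mem_coe, Finset.mem_filter] at hk
      rw [Finset.mem_coe, sites, Finset.mem_biUnion]
      refine ⟨k, hk.1, ?_⟩
      rw [siteOf, hk.2]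
      exact Finset.mem_singleton_self _
    · intro k hk l hl hkl
      simp only [Finset.coe_filter, Set.mem_setOf_eq, Finset.mem_range] at hk hl
      by_contra hne
      apply hdistw k l hk.1 hl.1 hne
      have hcell : (walkF v k).1 = (walkF v l).1 := by
        have := hkl
        simp only at this
        exact add_right_cancel this
      exact Prod.ext hcell (by rw [hk.2, hl.2])
  have hcardE : ((Finset.range L).filter (fun k => (walkF v k).2 = Dir.E)).card
      ≤ (sites L v).card := by
    apply Finset.card_le_card_of_injOn (fun k => (walkF v k).1 + ((1:ℤ),(0:ℤ)))
    · intro k hk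
      rw [Finset.mem_coe, Finset.mem_filter] at hk
      rw [Finset.mem_coe, sites, Finset.mem_biUnion]
      refine ⟨k, hk.1, ?_⟩
      rw [siteOf, hk.2]
      exact Finset.mem_singleton_self _
    · intro k hk l hl hkl
      simp only [Finset.coe_filter, Set.mem_setOf_eq, Finset.mem_range] at hk hl
      by_contra hne
      apply hdistw k l hk.1 hl.1 hne
      have hcell : (walkF v k).1 = (walkF v l).1 := by
        have := hkl
        simp only at this
        exact add_right_cancel this
      exact Prod.ext hcell (by rw [hk.2, hl.2])
  -- the balance identity
  have keyd : ∀ d : Dir, (1 : ℤ) = 2 * (if d = Dir.N ∨ d = Dir.E then 1 else 0) +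
      (-(vec (rot d)).1 + (vec (rot d)).2) := by decide
  have hbal : (L : ℤ) = 2 *
      (((Finset.range L).filter
        (fun k => (walkF v k).2 = Dir.N ∨ (walkF v k).2 = Dir.E)).card : ℤ) := by
    have h1 : (L : ℤ) = ∑ k ∈ Finset.range L, (1 : ℤ) := by simp
    rw [h1]
    have h2 : ∀ k ∈ Finset.range L, (1 : ℤ) =
        2 * (if (walkF v k).2 = Dir.N ∨ (walkF v k).2 = Dir.E then (1:ℤ) else 0) +
        (-(vec (rot ((walkF v k).2))).1 + (vec (rot ((walkF v k).2))).2) :=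
      fun k _ => keyd _
    rw [Finset.sum_congr rfl h2, Finset.sum_add_distrib, ← Finset.mul_sum]
    have h3 : ∑ k ∈ Finset.range L,
        (-(vec (rot ((walkF v k).2))).1 + (vec (rot ((walkF v k).2))).2) = 0 := by
      have hfst : ∑ k ∈ Finset.range L, (vec (rot ((walkF v k).2))).1 = 0 := by
        rw [← Prod.fst_sum, hsum0]; rfl
      have hsnd : ∑ k ∈ Finset.range L, (vec (rot ((walkF v k).2))).2 = 0 := by
        rw [← Prod.snd_sum, hsum0]; rfl
      rw [Finset.sum_add_distrib, Finset.sum_neg_distrib, hfst, hsnd]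
      simp
    rw [h3, add_zero, Finset.sum_boole]
  have hsplit : ((Finset.range L).filter
        (fun k => (walkF v k).2 = Dir.N ∨ (walkF v k).2 = Dir.E)).card ≤
      2 * (sites L v).card := by
    rw [Finset.filter_or]
    calc _ ≤ ((Finset.range L).filter (fun k => (walkF v k).2 = Dir.N)).card +
        ((Finset.range L).filter (fun k => (walkF v k).2 = Dir.E)).card :=
          Finset.card_union_le _ _
    _ ≤ 2 * (sites L v).card := by omega
  have hL4 : L ≤ 4 * (sites L v).card := by
    have : (L : ℤ) ≤ 4 * ((sites L v).card : ℤ) := by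
      rw [hbal]
      push_cast
      omega
    exact_mod_cast this
  exact ⟨L, hLpos, v, by omega, hsitesP⟩



/-! ### Infinite path construction -/

inductive ReachF (η : Cell → Bool) (c : Cell) : Cell → Prop
  | base : η c = true → ReachF η c c
  | stepE {d : Cell} : ReachF η c d → η (d + (1,0)) = true → ReachF η c (d + (1,0))
  | stepN {d : Cell} : ReachF η c d → η (d + (0,1)) = true → ReachF η c (d + (0,1))

lemma ReachF.eta_self {η : Cell → Bool} {c d : Cell} (h : ReachF η c d) : η c = true := by
  induction h with
  | base h => exact h
  | stepE _ _ ih => exact ih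
  | stepN _ _ ih => exact ih

lemma reachF_origin {η : Cell → Bool} {c : Cell} (h : Reach η c) : ReachF η (0,0) c := by
  induction h with
  | origin h => exact ReachF.base h
  | stepE _ h ih => exact ReachF.stepE ih h
  | stepN _ h ih => exact ReachF.stepN ih h

lemma ReachF.sum_le {η : Cell → Bool} {c d : Cell} (h : ReachF η c d) :
    c.1 + c.2 ≤ d.1 + d.2 := by
  induction h with
  | base _ => exact le_refl _
  | stepE _ _ ih => simp only [Prod.fst_add, Prod.snd_add]; omega
  | stepN _ _ ih => simp only [Prod.fst_add, Prod.snd_add]; omega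

lemma ReachF.split {η : Cell → Bool} {c d : Cell} (h : ReachF η c d) (hne : d ≠ c) :
    ReachF η (c + (1,0)) d ∨ ReachF η (c + (0,1)) d := by
  induction h with
  | base _ => exact absurd rfl hne
  | @stepE d' hr he ih =>
    by_cases hd : d' = c
    · subst hd
      exact Or.inl (ReachF.base he)
    · rcases ih hd with h' | h'
      · exact Or.inl (ReachF.stepE h' he)
      · exact Or.inr (ReachF.stepE h' he)
  | @stepN d' hr he ih =>
    by_cases hd : d' = c
    · subst hd
      exact Or.inr (ReachF.base he)
    · rcases ih hd with h' | h'
      · exact Or.inl (ReachF.stepN h' he)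
      · exact Or.inr (ReachF.stepN h' he)

lemma ReachF.down {η : Cell → Bool} {c d : Cell} (h : ReachF η c d) :
    ∀ m : ℤ, c.1 + c.2 ≤ m → m ≤ d.1 + d.2 → ∃ d', ReachF η c d' ∧ d'.1 + d'.2 = m := by
  induction h with
  | base hb =>
    intro m h1 h2
    exact ⟨c, ReachF.base hb, by omega⟩
  | @stepE d' hr he ih =>
    intro m h1 h2
    rcases lt_or_ge m (d'.1 + d'.2 + 1) with h' | h'
    · exact ih m h1 (by omega)
    · refine ⟨d' + (1,0), ReachF.stepE hr he, ?_⟩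
      simp only [Prod.fst_add, Prod.snd_add] at h2 ⊢
      omega
  | @stepN d' hr he ih =>
    intro m h1 h2
    rcases lt_or_ge m (d'.1 + d'.2 + 1) with h' | h'
    · exact ih m h1 (by omega)
    · refine ⟨d' + (0,1), ReachF.stepN hr he, ?_⟩
      simp only [Prod.fst_add, Prod.snd_add] at h2 ⊢
      omega

def Hgood (η : Cell → Bool) (c : Cell) : Prop :=
  ∀ n : ℤ, c.1 + c.2 ≤ n → ∃ d, ReachF η c d ∧ d.1 + d.2 = n

lemma Hgood.eta {η : Cell → Bool} {c : Cell} (h : Hgood η c) : η c = true := by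
  obtain ⟨d, hd, -⟩ := h (c.1 + c.2) le_rfl
  exact hd.eta_self

lemma Hgood.step {η : Cell → Bool} {c : Cell} (hc : Hgood η c)
    (hN : ¬ Hgood η (c + (0,1))) : Hgood η (c + (1,0)) := by
  rw [Hgood] at hN
  push_neg at hN
  obtain ⟨n₁, hn₁, hwit⟩ := hN
  simp only [Prod.fst_add, Prod.snd_add] at hn₁
  intro n hn
  simp only [Prod.fst_add, Prod.snd_add] at hn
  have hc2 := hc (max n n₁) (by omega)
  obtain ⟨d, hd, hsum⟩ := hc2
  have hne : d ≠ c := by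
    intro hq
    subst hq
    have := le_max_left n n₁
    omega
  rcases hd.split hne with h' | h'
  · refine h'.down n ?_ ?_
    · simp only [Prod.fst_add, Prod.snd_add]; omega
    · omega
  · exfalso
    obtain ⟨d', hd', hsum'⟩ := h'.down n₁ (by simp only [Prod.fst_add, Prod.snd_add]; omega)
      (le_trans (le_max_right n n₁) (le_of_eq hsum.symm))
    exact hwit d' hd' hsum'

open Classical in
noncomputable def pick (η : Cell → Bool) : ℕ → Cell
  | 0 => (0,0)
  | i+1 => if Hgood η ((pick η i) + (0,1)) then (pick η i) + (0,1) else (pick η i) + (1,0)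

lemma pick_good {η : Cell → Bool} (h0 : Hgood η (0,0)) (i : ℕ) : Hgood η (pick η i) := by
  induction i with
  | zero => exact h0
  | succ i ih =>
    rw [pick]
    split_ifs with h
    · exact h
    · exact ih.step h

lemma pick_spec {η : Cell → Bool} (i : ℕ) :
    pick η (i+1) = (pick η i) + (0,1) ∨ pick η (i+1) = (pick η i) + (1,0) := by
  rw [pick]
  split_ifs <;> simp

lemma pick_sum {η : Cell → Bool} (i : ℕ) :
    (pick η i).1 + (pick η i).2 = (i : ℤ) := by
  induction i with
  | zero => rfl
  | succ i ih =>
    rcases pick_spec (η := η) i with h | h <;>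
      · rw [h]
        simp only [Prod.fst_add, Prod.snd_add]
        push_cast
        omega

lemma pick_nonneg {η : Cell → Bool} (i : ℕ) :
    0 ≤ (pick η i).1 ∧ 0 ≤ (pick η i).2 := by
  induction i with
  | zero => exact ⟨le_rfl, le_rfl⟩
  | succ i ih =>
    rcases pick_spec (η := η) i with h | h <;>
      · rw [h]
        simp only [Prod.fst_add, Prod.snd_add]
        constructor <;> omega


/-! ### Probability setup -/

abbrev Idx := {q : ℤ × ℕ // Even (q.1 + (q.2 : ℤ))}

def idx (s : Cell) (h : 0 ≤ s.1 ∧ 0 ≤ s.2) : Idx :=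
  ⟨(s.1 - s.2, (s.1 + s.2).toNat), by
    have h1 : ((s.1 + s.2).toNat : ℤ) = s.1 + s.2 := Int.toNat_of_nonneg (by omega)
    rw [h1]
    exact ⟨s.1, by ring⟩⟩

lemma idx_inj {s s' : Cell} {h : 0 ≤ s.1 ∧ 0 ≤ s.2} {h' : 0 ≤ s'.1 ∧ 0 ≤ s'.2}
    (heq : idx s h = idx s' h') : s = s' := by
  have h1 := congrArg (fun q : Idx => q.1.1) heq
  have h2 := congrArg (fun q : Idx => (q.1.2 : ℤ)) heq
  simp only [idx] at h1 h2
  rw [Int.toNat_of_nonneg (by omega), Int.toNat_of_nonneg (by omega)] at h2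
  have : s.1 = s'.1 ∧ s.2 = s'.2 := by constructor <;> omega
  exact Prod.ext this.1 this.2

section prob

variable {Ω : Type} [mΩ : MeasurableSpace Ω] (ζ : Idx → Ω → Bool)

noncomputable def eta (ω : Ω) (s : Cell) : Bool :=
  if h : 0 ≤ s.1 ∧ 0 ≤ s.2 then ζ (idx s h) ω else false

abbrev WIdx := Σ L : ℕ, (Fin L → Fin 3)

noncomputable def vext (i : WIdx) : ℕ → Fin 3 :=
  fun k => if h : k < i.1 then i.2 ⟨k, h⟩ else 0

noncomputable def Ssites (i : WIdx) : Finset Cell := sites i.1 (vext i)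

def goodIdx (i : WIdx) : Prop :=
  0 < i.1 ∧ (i.1 + 3) / 4 ≤ (Ssites i).card ∧ ∀ s ∈ Ssites i, 0 ≤ s.1 ∧ 0 ≤ s.2

open Classical in
noncomputable def Devent (i : WIdx) : Set Ω :=
  if goodIdx i then ⋂ s ∈ Ssites i, {ω | eta ζ ω s = false} else ∅

lemma coverage {ω : Ω} (h0 : eta ζ ω (0,0) = true) (n : ℕ)
    (hno : ¬ ∃ c : Cell, Reach (eta ζ ω) c ∧ c.1 + c.2 = (n : ℤ)) :
    ∃ i : WIdx, ω ∈ Devent ζ i := by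
  have hfin : {c | Reach (eta ζ ω) c}.Finite := by
    apply Set.Finite.subset (Set.finite_Icc ((0:ℤ),(0:ℤ)) ((n:ℤ),(n:ℤ)))
    intro c hc
    have hnn := Reach.nonneg hc
    have hlt : c.1 + c.2 < (n : ℤ) := by
      by_contra hge
      push_neg at hge
      obtain ⟨d, hd, hsum⟩ := Reach.levels hc (n : ℤ) (by positivity) hge
      exact hno ⟨d, hd, hsum⟩
    constructor
    · exact ⟨hnn.1, hnn.2⟩
    · exact ⟨by omega, by omega⟩
  obtain ⟨L, hL, v, hcard, hsites⟩ := core h0 hfin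
  refine ⟨⟨L, fun k => v k⟩, ?_⟩
  have hvv : ∀ k < L, v k = vext ⟨L, fun k => v k⟩ k := by
    intro k hk
    simp [vext, hk]
  have hSeq : Ssites (⟨L, fun k => v k⟩ : WIdx) = sites L v := by
    rw [Ssites]
    exact (sites_congr hvv).symm
  have hgood : goodIdx (⟨L, fun k => v k⟩ : WIdx) := by
    refine ⟨hL, ?_, ?_⟩
    · rw [hSeq]; exact hcard
    · rw [hSeq]; intro s hs; exact (hsites s hs).1
  rw [Devent, if_pos hgood]
  rw [Set.mem_iInter₂]
  intro s hs
  rw [hSeq] at hs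
  exact (hsites s hs).2

end prob


section prob2

variable {Ω : Type} [mΩ : MeasurableSpace Ω] {P : Measure Ω}
variable {ζ : Idx → Ω → Bool}

lemma Devent_bound [IsProbabilityMeasure P]
    (hind : iIndepFun (m := fun _ => ⊤) ζ P) {δ : ℝ≥0∞} (hδ1 : δ ≤ 1)
    (hclosed : ∀ q, P {ω | ζ q ω = false} ≤ δ) (i : WIdx) :
    P (Devent ζ i) ≤ if 0 < i.1 then δ ^ ((i.1 + 3) / 4) else 0 := by
  classical
  rw [Devent]
  split_ifs with hg hpos hpos
  · -- good index
    obtain ⟨hL, hcard, hval⟩ := hg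
    set S := Ssites i with hS
    set T : Finset Idx := S.attach.image (fun s => idx s.1 (hval s.1 s.2)) with hT
    have hTcard : T.card = S.card := by
      rw [hT, Finset.card_image_of_injOn, Finset.card_attach]
      intro x _ y _ hxy
      exact Subtype.ext (idx_inj hxy)
    have hEq : (⋂ s ∈ S, {ω | eta ζ ω s = false}) = ⋂ q ∈ T, {ω | ζ q ω = false} := by
      ext ω
      simp only [Set.mem_iInter, Set.mem_setOf_eq]
      constructor
      · intro h q hq
        rw [hT, Finset.mem_image] at hq
        obtain ⟨⟨s, hs⟩, -, rfl⟩ := hq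
        have := h s hs
        rw [eta, dif_pos (hval s hs)] at this
        exact this
      · intro h s hs
        have hq : idx s (hval s hs) ∈ T := by
          rw [hT, Finset.mem_image]
          exact ⟨⟨s, hs⟩, Finset.mem_attach _ _, rfl⟩
        rw [eta, dif_pos (hval s hs)]
        exact h _ hq
    rw [hEq]
    have hEq2 : (⋂ q ∈ T, {ω | ζ q ω = false}) = ⋂ q ∈ T, ζ q ⁻¹' {false} := rfl
    rw [hEq2]
    have hind' : iIndep (fun q : Idx => MeasurableSpace.comap (ζ q) ⊤) P := hind
    rw [hind'.meas_biInter (fun q _ => ⟨{false}, trivial, rfl⟩)]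
    calc ∏ q ∈ T, P (ζ q ⁻¹' {false}) ≤ ∏ q ∈ T, δ :=
        Finset.prod_le_prod' (fun q _ => hclosed q)
      _ = δ ^ T.card := by rw [Finset.prod_const]
      _ ≤ δ ^ ((i.1 + 3) / 4) := by
          apply pow_le_pow_of_le_one zero_le hδ1
          rw [hTcard]
          exact hcard
  · exact absurd hg.1 hpos
  · simp
  · simp

end prob2


/-! ### Summation bound -/

lemma geom_tail_bound {δ : ℝ≥0∞} (hδ : 81 * δ ≤ 2⁻¹) :
    ∑' i : WIdx, (if 0 < i.1 then δ ^ ((i.1 + 3) / 4) else 0) ≤ 1296 * δ := by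
  have hδ1 : δ ≤ 1 := by
    have : δ ≤ 81 * δ := le_mul_of_one_le_left zero_le (by norm_num)
    calc δ ≤ 2⁻¹ := le_trans this hδ
    _ ≤ 1 := by norm_num
  -- sum over sigma type
  rw [ENNReal.tsum_sigma']
  have hfib : ∀ L : ℕ, ∑' _w : Fin L → Fin 3, (if 0 < L then δ ^ ((L + 3) / 4) else 0)
      = (3:ℝ≥0∞)^L * (if 0 < L then δ ^ ((L + 3) / 4) else 0) := by
    intro L
    rw [tsum_fintype, Finset.sum_const, Finset.card_univ]
    rw [Fintype.card_fun]
    simp only [Fintype.card_fin, nsmul_eq_mul]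
    push_cast
    ring
  calc ∑' (L : ℕ), ∑' (w : Fin L → Fin 3), (if 0 < L then δ ^ ((L + 3) / 4) else 0)
      = ∑' (L : ℕ), (3:ℝ≥0∞)^L * (if 0 < L then δ ^ ((L + 3) / 4) else 0) := by
        exact tsum_congr hfib
    _ ≤ ∑' (L : ℕ), (81 * δ) * (2⁻¹ : ℝ≥0∞) ^ (L / 4 - 1) := by
        apply ENNReal.tsum_le_tsum
        intro L
        rcases Nat.eq_zero_or_pos L with h0 | hpos
        · subst h0; simp
        · rw [if_pos hpos]
          set m := (L + 3) / 4 with hm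
          have hm1 : 1 ≤ m := by omega
          have hmL : L ≤ 4 * m := by omega
          have h3 : (3:ℝ≥0∞) ^ L ≤ 81 ^ m := by
            have : (81 : ℝ≥0∞) ^ m = 3 ^ (4 * m) := by
              rw [pow_mul]; norm_num
            rw [this]
            exact pow_le_pow_right₀ (by norm_num) hmL
          calc (3:ℝ≥0∞)^L * δ ^ m ≤ 81 ^ m * δ ^ m :=
              mul_le_mul_left h3 _
            _ = (81 * δ) ^ m := (mul_pow _ _ _).symm
            _ = (81 * δ) * (81 * δ) ^ (m - 1) := by
                rw [← pow_succ']
                congr 1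
                omega
            _ ≤ (81 * δ) * (2⁻¹) ^ (m - 1) :=
                mul_le_mul_right (pow_le_pow_left' hδ _) _
            _ ≤ (81 * δ) * (2⁻¹) ^ (L / 4 - 1) := by
                apply mul_le_mul_right
                apply pow_le_pow_of_le_one zero_le (by norm_num)
                omega
    _ = (81 * δ) * ∑' (L : ℕ), (2⁻¹ : ℝ≥0∞) ^ (L / 4 - 1) := by
        rw [ENNReal.tsum_mul_left]
    _ ≤ (81 * δ) * 16 := by
        apply mul_le_mul_right
        have hre : ∑' (L : ℕ), (2⁻¹ : ℝ≥0∞) ^ (L / 4 - 1)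
            = ∑' (p : ℕ × Fin 4), (2⁻¹ : ℝ≥0∞) ^ ((p.1 * 4 + (p.2 : ℕ)) / 4 - 1) := by
          rw [← Equiv.tsum_eq (Nat.divModEquiv 4).symm
            (fun L => (2⁻¹ : ℝ≥0∞) ^ (L / 4 - 1))]
          rfl
        rw [hre, ENNReal.tsum_prod']
        have hinner : ∀ q : ℕ, ∑' (r : Fin 4), (2⁻¹ : ℝ≥0∞) ^ ((q * 4 + (r:ℕ)) / 4 - 1)
            = 4 * (2⁻¹ : ℝ≥0∞) ^ (q - 1) := by
          intro q
          have hq : ∀ r : Fin 4, (q * 4 + (r:ℕ)) / 4 - 1 = q - 1 := by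
            intro r
            have : (r : ℕ) < 4 := r.2
            omega
          rw [tsum_congr (fun r => by rw [hq r])]
          rw [tsum_fintype, Finset.sum_const, Finset.card_univ, Fintype.card_fin,
            nsmul_eq_mul]
          norm_num
        rw [tsum_congr hinner, ENNReal.tsum_mul_left]
        have hgeo : ∑' (q : ℕ), (2⁻¹ : ℝ≥0∞) ^ (q - 1) ≤ 4 := by
          have hterm : ∀ q : ℕ, (2⁻¹ : ℝ≥0∞) ^ (q - 1) ≤ 2 * (2⁻¹ : ℝ≥0∞) ^ q := by
            intro q
            cases q with
            | zero => simpa using le_mul_of_one_le_left zero_le (by norm_num : (1:ℝ≥0∞) ≤ 2)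
            | succ q =>
              rw [Nat.add_sub_cancel, pow_succ']
              rw [← mul_assoc]
              rw [show (2 : ℝ≥0∞) * 2⁻¹ = 1 by
                rw [ENNReal.mul_inv_cancel] <;> norm_num]
              rw [one_mul]
          calc ∑' (q : ℕ), (2⁻¹ : ℝ≥0∞) ^ (q - 1)
              ≤ ∑' (q : ℕ), 2 * (2⁻¹ : ℝ≥0∞) ^ q := ENNReal.tsum_le_tsum hterm
            _ = 2 * ∑' (q : ℕ), (2⁻¹ : ℝ≥0∞) ^ q := ENNReal.tsum_mul_left
            _ = 2 * (1 - 2⁻¹ : ℝ≥0∞)⁻¹ := by rw [ENNReal.tsum_geometric]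
            _ = 4 := by
                rw [ENNReal.one_sub_inv_two, inv_inv]
                norm_num
        calc (4:ℝ≥0∞) * ∑' (q : ℕ), (2⁻¹ : ℝ≥0∞) ^ (q - 1) ≤ 4 * 4 :=
            mul_le_mul_right hgeo _
          _ = 16 := by norm_num
    _ = 1296 * δ := by ring

end Trunc11

open Trunc11

/-- The event that there is an infinite open oriented path from the origin in
oriented site percolation on the even sublattice of ℤ × ℤ≥0. -/
def OrientedSurvival {Ω : Type*}
    (ζ : {q : ℤ × ℕ // Even (q.1 + (q.2 : ℤ))} → Ω → Bool) : Set Ω :=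
  {ω | ∃ a : ℕ → ℤ, a 0 = 0 ∧
    (∀ i : ℕ, |a (i + 1) - a i| = 1) ∧
    ∀ i : ℕ, ∀ h : Even (a i + (i : ℤ)), ζ ⟨(a i, i), h⟩ ω = true}

/-- for supercritical oriented site percolation with site density
at least `1 - δ`, the survival probability tends to `1` as `δ → 0`; in
particular it is positive for small `δ`. -/
theorem truncation_stmt11 :
    ∀ ε > (0 : ℝ≥0∞), ∃ δ₀ > (0 : ℝ≥0∞), ∀ (δ : ℝ≥0∞), δ < δ₀ →
      ∀ (Ω : Type) (mΩ : MeasurableSpace Ω) (P : Measure Ω),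
        IsProbabilityMeasure P →
        ∀ (ζ : {q : ℤ × ℕ // Even (q.1 + (q.2 : ℤ))} → Ω → Bool),
          (∀ q, Measurable (ζ q)) →
          iIndepFun (m := fun _ => ⊤) ζ P →
          (∀ q, 1 - δ ≤ P {ω | ζ q ω = true}) →
          1 - ε < P (OrientedSurvival ζ) := by
  intro ε hε
  refine ⟨min (2600:ℝ≥0∞)⁻¹ (ε / 2600), lt_min ?_ ?_, ?_⟩
  · simp
  · exact ENNReal.div_pos hε.ne' (by norm_num)
  intro δ hδ Ω mΩ P hP ζ hmeas hind hopen
  haveI := hP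
  have hδa : δ < (2600:ℝ≥0∞)⁻¹ := lt_of_lt_of_le hδ (min_le_left _ _)
  have hδb : δ < ε / 2600 := lt_of_lt_of_le hδ (min_le_right _ _)
  have hδ1 : δ ≤ 1 := le_trans hδa.le (by norm_num)
  have hcancel : (2600:ℝ≥0∞) * 2600⁻¹ = 1 :=
    ENNReal.mul_inv_cancel (by norm_num) (by norm_num)
  have hnum : (81:ℝ≥0∞) * 2600⁻¹ ≤ 2⁻¹ := by
    rw [ENNReal.le_inv_iff_mul_le, mul_comm, ← mul_assoc]
    refine le_trans ?_ hcancel.le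
    apply mul_le_mul_left
    norm_num
  have h81 : 81 * δ ≤ 2⁻¹ := le_trans (mul_le_mul_right hδa.le _) hnum
  have hK1 : 1297 * δ < 1 := by
    have h1 : 1297 * δ < 1297 * (2600:ℝ≥0∞)⁻¹ := by
      refine ENNReal.mul_lt_mul_right (a := 1297) (by norm_num) (by norm_num) ?_
      exact hδa
    have h2 : (1297:ℝ≥0∞) * 2600⁻¹ ≤ 2600 * 2600⁻¹ := mul_le_mul_left (by norm_num) _
    exact lt_of_lt_of_le h1 (le_trans h2 hcancel.le)
  have hclosed : ∀ q, P {ω | ζ q ω = false} ≤ δ := by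
    intro q
    have hmq : MeasurableSet (ζ q ⁻¹' {true}) := hmeas q (measurableSet_singleton true)
    have hcompl : {ω | ζ q ω = false} = (ζ q ⁻¹' {true})ᶜ := by
      ext ω
      simp
    have hpre : P (ζ q ⁻¹' {true}) = P {ω | ζ q ω = true} := rfl
    rw [hcompl, measure_compl hmq (measure_ne_top _ _), measure_univ, hpre]
    calc 1 - P {ω | ζ q ω = true} ≤ 1 - (1 - δ) := tsub_le_tsub_left (hopen q) 1
    _ ≤ δ := tsub_le_iff_right.mpr le_add_tsub
  set U : Set Ω := {ω | eta ζ ω ((0:ℤ),(0:ℤ)) = false} ∪ ⋃ i : WIdx, Devent ζ i with hU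
  have hPU : P U ≤ 1297 * δ := by
    calc P U ≤ P {ω | eta ζ ω ((0:ℤ),(0:ℤ)) = false} + P (⋃ i : WIdx, Devent ζ i) :=
        measure_union_le _ _
    _ ≤ δ + 1296 * δ := by
        apply add_le_add
        · have heq : {ω | eta ζ ω ((0:ℤ),(0:ℤ)) = false}
              = {ω | ζ (idx ((0:ℤ),(0:ℤ)) ⟨le_rfl, le_rfl⟩) ω = false} := by
            ext ω
            rw [Set.mem_setOf_eq, Set.mem_setOf_eq, eta, dif_pos ⟨le_rfl, le_rfl⟩]
          rw [heq]
          exact hclosed _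
        · calc P (⋃ i : WIdx, Devent ζ i) ≤ ∑' i : WIdx, P (Devent ζ i) :=
              measure_iUnion_le _
          _ ≤ ∑' i : WIdx, (if 0 < i.1 then δ ^ ((i.1 + 3) / 4) else 0) :=
              ENNReal.tsum_le_tsum (Devent_bound hind hδ1 hclosed)
          _ ≤ 1296 * δ := geom_tail_bound h81
    _ = 1297 * δ := by ring
  have hsub : Uᶜ ⊆ OrientedSurvival ζ := by
    intro ω hω
    rw [Set.mem_compl_iff, hU, Set.mem_union, not_or] at hω
    obtain ⟨h0', hD⟩ := hω
    have h0 : eta ζ ω ((0:ℤ),(0:ℤ)) = true := by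
      rw [Set.mem_setOf_eq] at h0'
      simpa using h0'
    rw [Set.mem_iUnion, not_exists] at hD
    have hlev : ∀ n : ℕ, ∃ c : Cell, Reach (eta ζ ω) c ∧ c.1 + c.2 = (n:ℤ) := by
      intro n
      by_contra hno
      obtain ⟨i, hi⟩ := coverage ζ h0 n hno
      exact hD i hi
    have hH : Hgood (eta ζ ω) ((0:ℤ),(0:ℤ)) := by
      intro m hm
      simp only at hm
      obtain ⟨c, hc, hsum⟩ := hlev m.toNat
      refine ⟨c, reachF_origin hc, ?_⟩
      rw [hsum, Int.toNat_of_nonneg (by omega)]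
    set η : Cell → Bool := eta ζ ω with hηdef
    refine ⟨fun i => (pick η i).1 - (pick η i).2, by simp [pick], ?_, ?_⟩
    · intro i
      show |((pick η (i+1)).1 - (pick η (i+1)).2) - ((pick η i).1 - (pick η i).2)| = 1
      rcases pick_spec (η := η) i with h | h
      · rw [h]
        simp only [Prod.fst_add, Prod.snd_add]
        rw [show (pick η i).1 + ((0:ℤ),(1:ℤ)).1 - ((pick η i).2 + ((0:ℤ),(1:ℤ)).2)
            - ((pick η i).1 - (pick η i).2) = -1 by push_cast; ring]
        decide
      · rw [h]
        simp only [Prod.fst_add, Prod.snd_add]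
        rw [show (pick η i).1 + ((1:ℤ),(0:ℤ)).1 - ((pick η i).2 + ((1:ℤ),(0:ℤ)).2)
            - ((pick η i).1 - (pick η i).2) = 1 by push_cast; ring]
        decide
    · intro i h
      have hg := pick_good hH i
      have hη := hg.eta
      have hnn := pick_nonneg (η := η) i
      rw [hηdef, eta, dif_pos hnn] at hη
      have hidx : idx (pick η i) hnn
          = ⟨((pick η i).1 - (pick η i).2, i), h⟩ := by
        apply Subtype.ext
        simp only [idx]
        refine Prod.ext rfl ?_
        simp only
        rw [pick_sum, Int.toNat_natCast]
      rw [hidx] at hη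
      exact hη
  have hmain : 1 - 1297 * δ ≤ P (OrientedSurvival ζ) := by
    have h1 : (1:ℝ≥0∞) ≤ P U + P Uᶜ := by
      rw [← measure_univ (μ := P), ← Set.union_compl_self U]
      exact measure_union_le _ _
    have h2 : 1 - P U ≤ P Uᶜ := tsub_le_iff_left.mpr h1
    calc (1:ℝ≥0∞) - 1297 * δ ≤ 1 - P U := tsub_le_tsub_left hPU 1
    _ ≤ P Uᶜ := h2
    _ ≤ P (OrientedSurvival ζ) := measure_mono hsub
  rcases le_or_gt ε 1 with hε1 | hε1
  · have hδε : 1297 * δ < ε := by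
      calc 1297 * δ ≤ 2600 * δ := mul_le_mul_left (by norm_num) δ
      _ < 2600 * (ε / 2600) := by
          refine ENNReal.mul_lt_mul_right (a := 2600) (by norm_num) (by norm_num) ?_
          exact hδb
      _ = ε := by
          rw [mul_comm, ENNReal.div_mul_cancel (by norm_num) (by norm_num)]
    apply ENNReal.sub_lt_of_lt_add hε1
    calc (1:ℝ≥0∞) = (1 - 1297 * δ) + 1297 * δ := (tsub_add_cancel_of_le hK1.le).symm
    _ < (1 - 1297 * δ) + ε := by
        exact ENNReal.add_lt_add_left (ne_top_of_le_ne_top ENNReal.one_ne_top tsub_le_self) hδε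
    _ ≤ P (OrientedSurvival ζ) + ε := add_le_add_left hmain _
  · have hz : (1:ℝ≥0∞) - ε = 0 := tsub_eq_zero_of_le hε1.le
    rw [hz]
    exact lt_of_lt_of_le (tsub_pos_of_lt hK1) hmain
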